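/- Let A ⊆ ℝ^d be a nonempty finite set with mean μ = (1/|A|)∑_{x∈A} x, and let S ⊆ ℝ^d be a nonempty finite set of centers with φ_A(S) ≥ 64·φ_A({μ}) and φ_A(S) > 0. Let T ≥ (7/3)·φ_{{μ}}(S). Then for every x ∈ A, min{φ_{{x}}(S), T} / (∑_{y∈A} min{φ_{{y}}(S), T}) ≤ 8·φ_{{x}}(S)/φ_A(S); i.e., the probability of x under thresholded D² sampling restricted to A is at most 8 times its probability under D² sampling restricted to A. -/
import Mathlib


open Finset

open scoped Classical

/-- `phiPt x S` is the squared distance from `x` to its nearest center in `S`,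
i.e. `min_{s ∈ S} ‖x - s‖²`. -/
noncomputable def phiPt {d : ℕ} (x : EuclideanSpace ℝ (Fin d))
    (S : Finset (EuclideanSpace ℝ (Fin d))) : ℝ :=
  sInf ((fun s => ‖x - s‖ ^ 2) '' (S : Set (EuclideanSpace ℝ (Fin d))))

/-- `phi A S = ∑_{x ∈ A} min_{s ∈ S} ‖x - s‖²`, the `k`-means cost of centers `S` on `A`. -/
noncomputable def phi {d : ℕ} (A S : Finset (EuclideanSpace ℝ (Fin d))) : ℝ :=
  ∑ x ∈ A, phiPt x S

/-- The mean (centroid) of a finite set of points. -/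
noncomputable def mean {d : ℕ} (A : Finset (EuclideanSpace ℝ (Fin d))) :
    EuclideanSpace ℝ (Fin d) :=
  (A.card : ℝ)⁻¹ • ∑ x ∈ A, x

/-- `rho X S z` is the cost of the centers `S` on `X` after discarding the `z`
points of `X` farthest from `S`: the minimum of `phi Y S` over `Y ⊆ X` with
`|Y| = |X| - z`. -/
noncomputable def rho {d : ℕ} (X S : Finset (EuclideanSpace ℝ (Fin d))) (z : ℕ) : ℝ :=
  sInf ((fun Y : Finset (EuclideanSpace ℝ (Fin d)) => phi Y S) ''
    {Y : Finset (EuclideanSpace ℝ (Fin d)) | Y ⊆ X ∧ Y.card = X.card - z})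

lemma phiPt_nonneg' {d : ℕ} (x : EuclideanSpace ℝ (Fin d))
    (S : Finset (EuclideanSpace ℝ (Fin d))) (hS : S.Nonempty) : 0 ≤ phiPt x S := by
  apply le_csInf
  · exact (Set.Nonempty.image _ (by exact_mod_cast hS))
  · rintro b ⟨s, -, rfl⟩; positivity

lemma phiPt_le' {d : ℕ} (x : EuclideanSpace ℝ (Fin d))
    (S : Finset (EuclideanSpace ℝ (Fin d))) {s : EuclideanSpace ℝ (Fin d)} (hs : s ∈ S) :
    phiPt x S ≤ ‖x - s‖ ^ 2 := by
  apply csInf_le ((S.finite_toSet.image _).bddBelow)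
  exact ⟨s, by simpa using hs, rfl⟩

lemma phiPt_mem' {d : ℕ} (x : EuclideanSpace ℝ (Fin d))
    (S : Finset (EuclideanSpace ℝ (Fin d))) (hS : S.Nonempty) :
    ∃ s ∈ S, phiPt x S = ‖x - s‖ ^ 2 := by
  have hfin : ((fun s => ‖x - s‖ ^ 2) '' (S : Set (EuclideanSpace ℝ (Fin d)))).Finite :=
    S.finite_toSet.image _
  have hne : ((fun s => ‖x - s‖ ^ 2) '' (S : Set (EuclideanSpace ℝ (Fin d)))).Nonempty :=
    Set.Nonempty.image _ (by exact_mod_cast hS)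
  obtain ⟨s, hs, heq⟩ := hne.csInf_mem hfin
  exact ⟨s, by simpa using hs, heq.symm⟩

lemma phiPt_singleton' {d : ℕ} (x μ : EuclideanSpace ℝ (Fin d)) :
    phiPt x ({μ} : Finset (EuclideanSpace ℝ (Fin d))) = ‖x - μ‖ ^ 2 := by
  simp [phiPt]

/-- If `φ_A(S) ≥ 64·φ_A({μ})`, `φ_A(S) > 0`, and `T ≥ (7/3)·φ_{{μ}}(S)`,
then for every `x ∈ A`, the probability of `x` under thresholded `D²` sampling restricted
to `A` is at most `8` times its probability under `D²` sampling restricted to `A`. -/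
theorem stmt10 {d : ℕ} (A S : Finset (EuclideanSpace ℝ (Fin d)))
    (hA : A.Nonempty) (hS : S.Nonempty)
    (h : phi A S ≥ 64 * phi A {mean A}) (hpos : 0 < phi A S)
    (T : ℝ) (hT : T ≥ (7 / 3) * phiPt (mean A) S) :
    ∀ x ∈ A,
      min (phiPt x S) T / (∑ y ∈ A, min (phiPt y S) T) ≤ 8 * phiPt x S / phi A S := by
  intro x hx
  set μ := mean A with hμ
  obtain ⟨s₀, hs₀, hs₀eq⟩ := phiPt_mem' μ S hS
  have hm0 : 0 ≤ phiPt μ S := phiPt_nonneg' μ S hS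
  -- key pointwise bound
  have hkey : ∀ y : EuclideanSpace ℝ (Fin d),
      phiPt y S ≤ 2 * ‖y - μ‖ ^ 2 + 2 * phiPt μ S := by
    intro y
    have h1 : phiPt y S ≤ ‖y - s₀‖ ^ 2 := phiPt_le' y S hs₀
    have h2 : ‖y - s₀‖ ≤ ‖y - μ‖ + ‖μ - s₀‖ := by
      have := norm_add_le (y - μ) (μ - s₀)
      simpa using this
    have h3 : ‖y - s₀‖ ^ 2 ≤ 2 * ‖y - μ‖ ^ 2 + 2 * ‖μ - s₀‖ ^ 2 := by
      nlinarith [norm_nonneg (y - s₀), norm_nonneg (y - μ), norm_nonneg (μ - s₀),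
        sq_nonneg (‖y - μ‖ - ‖μ - s₀‖)]
    rw [hs₀eq]; linarith
  have hmin : ∀ y : EuclideanSpace ℝ (Fin d),
      phiPt y S - 2 * ‖y - μ‖ ^ 2 ≤ min (phiPt y S) T := by
    intro y
    apply le_min
    · nlinarith [sq_nonneg ‖y - μ‖]
    · have := hkey y
      linarith
  have hphiμ : phi A ({μ} : Finset (EuclideanSpace ℝ (Fin d)))
      = ∑ y ∈ A, ‖y - μ‖ ^ 2 := by
    unfold phi
    exact Finset.sum_congr rfl fun y _ => phiPt_singleton' y μ
  have hDlb : phi A S - 2 * phi A ({μ} : Finset (EuclideanSpace ℝ (Fin d)))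
      ≤ ∑ y ∈ A, min (phiPt y S) T := by
    have := Finset.sum_le_sum (fun y (_ : y ∈ A) => hmin y)
    rw [hphiμ]
    unfold phi
    rw [Finset.mul_sum, ← Finset.sum_sub_distrib]
    exact this
  have hD8 : phi A S ≤ 8 * ∑ y ∈ A, min (phiPt y S) T := by
    nlinarith
  have hDpos : 0 < ∑ y ∈ A, min (phiPt y S) T := by nlinarith
  have hx0 : 0 ≤ phiPt x S := phiPt_nonneg' x S hS
  rw [div_le_div_iff₀ hDpos hpos]
  have h1 : min (phiPt x S) T * phi A S ≤ phiPt x S * phi A S :=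
    mul_le_mul_of_nonneg_right (min_le_left _ _) hpos.le
  have h2 : phiPt x S * phi A S ≤ phiPt x S * (8 * ∑ y ∈ A, min (phiPt y S) T) :=
    mul_le_mul_of_nonneg_left hD8 hx0
  linarith
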